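/- arXiv:2009.05594 — 3 statements merged into one kernel-verified Lean document; each statement's English description precedes it below -/
import Mathlib

section
/- There exists a continuous function f : ℝ → ℝ with 0 ≤ f(y) ≤ 1 for all y, such that the set K = {x ∈ [0,1] : f(x) = 0} is uncountable and has Lebesgue measure zero, and the Lebesgue integral ∫_{[0,1] \ K} 1/f(x) dx is finite. (For instance, one may take K to be the ternary Cantor set and, on each complementary open interval (a,b) of the Cantor set in [0,1], set f(x) = min{|x−a|^{1/3}, |x−b|^{1/3}}, with f = 0 on K ∪ (−∞,0] ∪ [1,∞); then ∫_{[0,1]\K} 1/f dx = 3^{1/3}/2^{2/3} · Σ_{n≥0} (2/3^{2/3})ⁿ < ∞.) -/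
open MeasureTheory Set Filter
open Metric Pointwise


lemma myInfDist_third (c x : ℝ) (S : Set ℝ) :
    Metric.infDist x ((fun y => (c + y) / 3) '' S) = 3⁻¹ * Metric.infDist (3 * x - c) S := by
  have h1 : (fun y => (c + y) / 3) '' S = (3⁻¹ : ℝ) • ((fun y => c + y) '' S) := by
    rw [← Set.image_smul, ← Set.image_comp]
    apply congrArg (· '' S)
    funext y
    simp only [Function.comp_apply, smul_eq_mul]
    ring
  have hiso : Isometry (fun y : ℝ => c + y) :=
    Isometry.of_dist_eq fun a b => dist_add_left c a b
  calc Metric.infDist x ((fun y => (c + y) / 3) '' S)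
      = Metric.infDist ((3⁻¹ : ℝ) • (3 * x)) ((3⁻¹ : ℝ) • ((fun y => c + y) '' S)) := by
        rw [h1]
        congr 1
        rw [smul_eq_mul]
        ring
    _ = ‖(3⁻¹ : ℝ)‖ * Metric.infDist (3 * x) ((fun y => c + y) '' S) :=
        infDist_smul₀ (by norm_num) _ _
    _ = 3⁻¹ * Metric.infDist (3 * x - c) S := by
        rw [show (3 * x : ℝ) = c + (3 * x - c) by ring, Metric.infDist_image hiso]
        norm_num

lemma preCantorSet_nonempty (n : ℕ) : (preCantorSet n).Nonempty :=
  ⟨0, zero_mem_preCantorSet n⟩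

lemma myVol_nbhd (n : ℕ) : ∀ ε : ℝ, 0 ≤ ε →
    volume {x : ℝ | Metric.infDist x (preCantorSet n) ≤ ε}
      ≤ ENNReal.ofReal ((2/3)^n * (1 + 2 * 3^n * ε)) := by
  induction n with
  | zero =>
    intro ε hε
    have hsub : {x : ℝ | Metric.infDist x (preCantorSet 0) ≤ ε} ⊆ Icc (-ε) (1 + ε) := by
      intro x hx
      simp only [preCantorSet_zero, mem_setOf_eq] at hx
      obtain ⟨y, hy, hxy⟩ := isClosed_Icc.exists_infDist_eq_dist
        (⟨0, by norm_num⟩ : (Icc (0:ℝ) 1).Nonempty) x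
      rw [hxy] at hx
      rw [Real.dist_eq] at hx
      obtain ⟨h1, h2⟩ := abs_le.mp hx
      obtain ⟨hy1, hy2⟩ := hy
      constructor <;> linarith
    calc volume {x : ℝ | Metric.infDist x (preCantorSet 0) ≤ ε}
        ≤ volume (Icc (-ε) (1 + ε)) := measure_mono hsub
      _ = ENNReal.ofReal (1 + ε - -ε) := Real.volume_Icc
      _ ≤ ENNReal.ofReal ((2/3)^0 * (1 + 2 * 3^0 * ε)) :=
          ENNReal.ofReal_le_ofReal (le_of_eq (by ring))
  | succ n ih =>
    intro ε hε
    set S := preCantorSet n with hS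
    set N := {z : ℝ | Metric.infDist z S ≤ 3 * ε} with hN
    have key : {x : ℝ | Metric.infDist x (preCantorSet (n+1)) ≤ ε}
        ⊆ ((3 * ·) ⁻¹' N) ∪ ((3 * ·) ⁻¹' ((· - 2) ⁻¹' N)) := by
      intro x hx
      simp only [mem_setOf_eq, preCantorSet_succ] at hx
      have e0 : ((· / 3) : ℝ → ℝ) '' S = (fun y => ((0:ℝ) + y) / 3) '' S := by
        apply congrArg (· '' S); funext y; simp
      have e2 : ((fun y => (2 + y) / 3) : ℝ → ℝ) '' S = (fun y => ((2:ℝ) + y) / 3) '' S := rfl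
      have hmin : Metric.infDist x ((· / 3) '' S ∪ (fun y => (2 + y) / 3) '' S)
          = min (Metric.infDist x ((· / 3) '' S)) (Metric.infDist x ((fun y => (2 + y) / 3) '' S)) := by
        have hne1 : (((· / 3) : ℝ → ℝ) '' S).Nonempty := (preCantorSet_nonempty n).image _
        have hne2 : (((fun y => (2 + y) / 3) : ℝ → ℝ) '' S).Nonempty := (preCantorSet_nonempty n).image _
        simp only [Metric.infDist, EMetric.infEdist_union]
        rw [ENNReal.toReal_min (Metric.infEdist_ne_top hne1) (Metric.infEdist_ne_top hne2)]
      rw [hmin] at hx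
      rcases min_le_iff.mp hx with h | h
      · left
        rw [e0, myInfDist_third] at h
        simp only [mem_preimage, hN, mem_setOf_eq]
        have : Metric.infDist (3 * x - 0) S ≤ 3 * ε := by linarith
        simpa using this
      · right
        rw [e2, myInfDist_third] at h
        simp only [mem_preimage, hN, mem_setOf_eq]
        have : Metric.infDist (3 * x - 2) S ≤ 3 * ε := by linarith
        exact this
    have hNvol : volume N ≤ ENNReal.ofReal ((2/3)^n * (1 + 2 * 3^n * (3 * ε))) :=
      ih (3 * ε) (by linarith)
    have hpre1 : volume ((3 * ·) ⁻¹' N) ≤ ENNReal.ofReal 3⁻¹ * volume N := by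
      rw [Real.volume_preimage_mul_left (by norm_num : (3:ℝ) ≠ 0)]
      simp [abs_of_pos]
    have hpre2 : volume ((3 * ·) ⁻¹' ((· - 2) ⁻¹' N)) ≤ ENNReal.ofReal 3⁻¹ * volume N := by
      rw [Real.volume_preimage_mul_left (by norm_num : (3:ℝ) ≠ 0)]
      have : volume ((· - 2) ⁻¹' N) = volume N := by
        have : ((· - 2) : ℝ → ℝ) = (· + (-2)) := by funext y; ring
        rw [this]
        exact measure_preimage_add_right volume (-2) N
      rw [this]
      simp [abs_of_pos]
    calc volume {x : ℝ | Metric.infDist x (preCantorSet (n+1)) ≤ ε}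
        ≤ volume (((3 * ·) ⁻¹' N) ∪ ((3 * ·) ⁻¹' ((· - 2) ⁻¹' N))) := measure_mono key
      _ ≤ volume ((3 * ·) ⁻¹' N) + volume ((3 * ·) ⁻¹' ((· - 2) ⁻¹' N)) := measure_union_le _ _
      _ ≤ ENNReal.ofReal 3⁻¹ * volume N + ENNReal.ofReal 3⁻¹ * volume N := add_le_add hpre1 hpre2
      _ ≤ ENNReal.ofReal 3⁻¹ * ENNReal.ofReal ((2/3)^n * (1 + 2 * 3^n * (3 * ε)))
          + ENNReal.ofReal 3⁻¹ * ENNReal.ofReal ((2/3)^n * (1 + 2 * 3^n * (3 * ε))) := by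
          gcongr
      _ = ENNReal.ofReal (3⁻¹ * ((2/3)^n * (1 + 2 * 3^n * (3 * ε)))
          + 3⁻¹ * ((2/3)^n * (1 + 2 * 3^n * (3 * ε)))) := by
          rw [← ENNReal.ofReal_mul (by norm_num), ← ENNReal.ofReal_add] <;> positivity
      _ ≤ ENNReal.ofReal ((2/3)^(n+1) * (1 + 2 * 3^(n+1) * ε)) := by
          apply ENNReal.ofReal_le_ofReal
          rw [pow_succ, pow_succ]
          ring_nf
          exact le_refl _

lemma myVolume_cantorSet : volume cantorSet = 0 := by
  have hb : ∀ n : ℕ, volume cantorSet ≤ (ENNReal.ofReal (2/3))^n := by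
    intro n
    have hsub : cantorSet ⊆ {x : ℝ | Metric.infDist x (preCantorSet n) ≤ 0} := by
      intro x hx
      have : x ∈ preCantorSet n := Set.mem_iInter.mp hx n
      simp [Metric.infDist_zero_of_mem this]
    calc volume cantorSet ≤ volume {x : ℝ | Metric.infDist x (preCantorSet n) ≤ 0} :=
          measure_mono hsub
      _ ≤ ENNReal.ofReal ((2/3)^n * (1 + 2 * 3^n * 0)) := myVol_nbhd n 0 le_rfl
      _ = (ENNReal.ofReal (2/3))^n := by
          rw [← ENNReal.ofReal_pow (by norm_num)]
          norm_num
  have htend : Tendsto (fun n : ℕ => (ENNReal.ofReal (2/3))^n) atTop (nhds 0) :=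
    ENNReal.tendsto_pow_atTop_nhds_zero_of_lt_one (by
      rw [ENNReal.ofReal_lt_one]; norm_num)
  have := ge_of_tendsto htend (Filter.Eventually.of_forall hb)
  simpa using this

lemma cantorFunction_mem (n : ℕ) : ∀ a : ℕ → Bool,
    2/3 * Cardinal.cantorFunction (1/3) a ∈ preCantorSet n := by
  induction n with
  | zero =>
    intro a
    have h0 : 0 ≤ Cardinal.cantorFunction (1/3) a :=
      tsum_nonneg fun n => Cardinal.cantorFunctionAux_nonneg (by norm_num)
    have h1 : Cardinal.cantorFunction (1/3) a ≤ 3/2 := by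
      have hle : Cardinal.cantorFunction (1/3) a ≤ Cardinal.cantorFunction (1/3) (fun _ => true) :=
        Cardinal.cantorFunction_le (by norm_num) (by norm_num) (fun n _ => rfl)
      have heq : Cardinal.cantorFunction (1/3) (fun _ => true) = 3/2 := by
        unfold Cardinal.cantorFunction
        have : Cardinal.cantorFunctionAux (1/3) (fun _ => true) = fun n => (1/3)^n :=
          funext fun n => Cardinal.cantorFunctionAux_true rfl
        rw [this, tsum_geometric_of_lt_one (by norm_num) (by norm_num)]
        norm_num
      linarith
    exact ⟨by linarith, by linarith⟩
  | succ n ih =>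
    intro a
    rw [preCantorSet_succ]
    rw [Cardinal.cantorFunction_succ a (by norm_num) (by norm_num)]
    cases h : a 0 with
    | false =>
      refine Or.inl ⟨2/3 * Cardinal.cantorFunction (1/3) (fun n => a (n+1)), ih _, ?_⟩
      simp only [Bool.cond_false]
      ring
    | true =>
      refine Or.inr ⟨2/3 * Cardinal.cantorFunction (1/3) (fun n => a (n+1)), ih _, ?_⟩
      simp only [Bool.cond_true]
      ring

lemma myCantorSet_uncountable : ¬ cantorSet.Countable := by
  intro hc
  set g : (ℕ → Bool) → ℝ := fun a => 2/3 * Cardinal.cantorFunction (1/3) a with hg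
  have hginj : Function.Injective g := by
    intro a b hab
    exact Cardinal.cantorFunction_injective (by norm_num) (by norm_num)
      (mul_left_cancel₀ (by norm_num : (2/3:ℝ) ≠ 0) hab)
  have hrange : Set.range g ⊆ cantorSet := by
    rintro _ ⟨a, rfl⟩
    exact Set.mem_iInter.mpr fun n => cantorFunction_mem n a
  have hcr : (Set.range g).Countable := hc.mono hrange
  have huniv : (Set.univ : Set (ℕ → Bool)).Countable := by
    have := hcr.preimage hginj
    simpa using this
  have : Countable (ℕ → Bool) := Set.countable_univ_iff.mp huniv
  obtain ⟨s, hs⟩ := exists_surjective_nat (ℕ → Bool)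
  classical
  apply Function.cantor_surjective (fun n => {m : ℕ | s n m = true})
  intro S
  obtain ⟨n, hn⟩ := hs (fun m => decide (m ∈ S))
  exact ⟨n, by ext m; simp [hn]⟩

noncomputable def myF : ℝ → ℝ :=
  fun x => min 1 (Real.sqrt (Real.sqrt (Metric.infDist x cantorSet)))

lemma myF_cont : Continuous myF :=
  continuous_const.min
    ((Real.continuous_sqrt.comp Real.continuous_sqrt).comp
      (Metric.continuous_infDist_pt cantorSet))

lemma myF_nonneg (y : ℝ) : 0 ≤ myF y := le_min zero_le_one (Real.sqrt_nonneg _)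

lemma myF_le_one (y : ℝ) : myF y ≤ 1 := min_le_left _ _

lemma myF_zero_iff (x : ℝ) : myF x = 0 ↔ x ∈ cantorSet := by
  have hd : 0 ≤ Metric.infDist x cantorSet := Metric.infDist_nonneg
  constructor
  · intro h
    have hs : Real.sqrt (Real.sqrt (Metric.infDist x cantorSet)) = 0 := by
      by_contra hne
      have hpos : 0 < Real.sqrt (Real.sqrt (Metric.infDist x cantorSet)) :=
        lt_of_le_of_ne (Real.sqrt_nonneg _) (Ne.symm hne)
      have : 0 < myF x := lt_min one_pos hpos
      linarith
    have h1 : Real.sqrt (Metric.infDist x cantorSet) ≤ 0 := Real.sqrt_eq_zero'.mp hs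
    have h2 : Real.sqrt (Metric.infDist x cantorSet) = 0 :=
      le_antisymm h1 (Real.sqrt_nonneg _)
    have h3 : Metric.infDist x cantorSet ≤ 0 := Real.sqrt_eq_zero'.mp h2
    exact (isClosed_cantorSet.mem_iff_infDist_zero ⟨0, zero_mem_cantorSet⟩).mpr
      (le_antisymm h3 hd)
  · intro hx
    simp [myF, Metric.infDist_zero_of_mem hx]

lemma mySkbound (k : ℕ) (x : ℝ) (hx : x ∈ Set.Icc (0:ℝ) 1) (h : myF x ≤ (1/2)^k) :
    Metric.infDist x cantorSet ≤ (1/16)^k := by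
  cases k with
  | zero =>
    have : Metric.infDist x cantorSet ≤ dist x 0 :=
      Metric.infDist_le_dist_of_mem zero_mem_cantorSet
    rw [Real.dist_eq, sub_zero] at this
    have := this.trans (abs_le.mpr ⟨by linarith [hx.1], hx.2⟩)
    simpa using this
  | succ j =>
    have hlt1 : ((1:ℝ)/2)^(j+1) < 1 := pow_lt_one₀ (by norm_num) (by norm_num) (Nat.succ_ne_zero j)
    have hs : Real.sqrt (Real.sqrt (Metric.infDist x cantorSet)) ≤ (1/2)^(j+1) := by
      rcases min_le_iff.mp h with h1 | h1
      · linarith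
      · exact h1
    have h2 : Real.sqrt (Metric.infDist x cantorSet) ≤ ((1/2:ℝ)^(j+1))^2 :=
      (Real.sqrt_le_left (by positivity)).mp hs
    have h3 : Metric.infDist x cantorSet ≤ (((1/2:ℝ)^(j+1))^2)^2 :=
      (Real.sqrt_le_left (by positivity)).mp h2
    have he : ((((1:ℝ)/2)^(j+1))^2)^2 = (1/16)^(j+1) := by
      rw [pow_right_comm (1/2:ℝ) (j+1) 2, show ((1:ℝ)/2)^2 = 1/4 by norm_num,
        pow_right_comm (1/4:ℝ) (j+1) 2, show ((1:ℝ)/4)^2 = 1/16 by norm_num]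
    rw [he] at h3
    exact h3

lemma real_bound (k : ℕ) :
    (2:ℝ)^(k+1) * ((2/3)^(2*k) * (1 + 2*3^(2*k)*(1/16)^k)) ≤ 6*(8/9)^k := by
  have h49 : ((2:ℝ)/3)^(2*k) = (4/9)^k := by rw [pow_mul]; norm_num
  have h9 : ((3:ℝ))^(2*k) = 9^k := by rw [pow_mul]; norm_num
  rw [h49, h9]
  have a : ((8:ℝ)/9)^k = 2^k*((4:ℝ)/9)^k := by rw [← mul_pow]; norm_num
  have b : ((1:ℝ)/2)^k = 2^k*((4/9:ℝ)^k*((9:ℝ)^k*((1:ℝ)/16)^k)) := by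
    rw [← mul_pow, ← mul_pow, ← mul_pow]; norm_num
  have hle : ((1:ℝ)/2)^k ≤ ((8:ℝ)/9)^k := pow_le_pow_left₀ (by norm_num) (by norm_num) k
  have e : (2:ℝ)^(k+1) * ((4/9)^k * (1 + 2*9^k*(1/16)^k)) = 2*(8/9)^k + 4*((1/2)^k) := by
    rw [a, b, pow_succ]; ring
  rw [e]
  have : (0:ℝ) ≤ (8/9:ℝ)^k := by positivity
  linarith

/-- There is a continuous `f : ℝ → ℝ` with `0 ≤ f ≤ 1` whose zero set inside
`[0,1]` is uncountable and Lebesgue-null, while `∫_{[0,1] \ {f = 0}} 1/f` is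
finite (e.g. built from the ternary Cantor set). -/
theorem cantor_like_zero_set_with_integrable_reciprocal :
    ∃ f : ℝ → ℝ, Continuous f ∧ (∀ y : ℝ, 0 ≤ f y ∧ f y ≤ 1) ∧
      ¬ ({x ∈ Set.Icc (0:ℝ) 1 | f x = 0}).Countable ∧
      volume {x ∈ Set.Icc (0:ℝ) 1 | f x = 0} = 0 ∧
      (∫⁻ x in Set.Icc (0:ℝ) 1 \ {x : ℝ | f x = 0},
        ENNReal.ofReal (1 / f x)) < ⊤ := by
  refine ⟨myF, myF_cont, fun y => ⟨myF_nonneg y, myF_le_one y⟩, ?_, ?_, ?_⟩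
  case _ =>
    have hZ : {x ∈ Set.Icc (0:ℝ) 1 | myF x = 0} = cantorSet := by
      ext x
      constructor
      · rintro ⟨_, hfx⟩
        exact (myF_zero_iff x).mp hfx
      · intro hx
        exact ⟨cantorSet_subset_unitInterval hx, (myF_zero_iff x).mpr hx⟩
    rw [hZ]
    exact myCantorSet_uncountable
  case _ =>
    have hZ : {x ∈ Set.Icc (0:ℝ) 1 | myF x = 0} = cantorSet := by
      ext x
      constructor
      · rintro ⟨_, hfx⟩
        exact (myF_zero_iff x).mp hfx
      · intro hx
        exact ⟨cantorSet_subset_unitInterval hx, (myF_zero_iff x).mpr hx⟩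
    rw [hZ]
    exact myVolume_cantorSet
  case _ =>
    set T : ℕ → Set ℝ :=
      fun k => Set.Icc 0 1 ∩ myF ⁻¹' (Set.Ioc ((1/2)^(k+1)) ((1/2)^k)) with hT
    -- coverage
    have hcover : Set.Icc (0:ℝ) 1 \ {x : ℝ | myF x = 0} ⊆ ⋃ k, T k := by
      rintro x ⟨hx1, hx2⟩
      have hfpos : 0 < myF x :=
        lt_of_le_of_ne (myF_nonneg x) (Ne.symm (by simpa using hx2))
      obtain ⟨n, hn⟩ := exists_pow_lt_of_lt_one hfpos (by norm_num : (1:ℝ)/2 < 1)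
      have hex : ∃ m : ℕ, (1/2:ℝ)^(m+1) < myF x := by
        refine ⟨n, lt_of_le_of_lt ?_ hn⟩
        rw [pow_succ]
        nlinarith [pow_pos (by norm_num : (0:ℝ) < 1/2) n]
      set k := Nat.find hex with hk
      refine Set.mem_iUnion.mpr ⟨k, hx1, ?_⟩
      refine Set.mem_Ioc.mpr ⟨Nat.find_spec hex, ?_⟩
      cases hkk : k with
      | zero => simpa using myF_le_one x
      | succ j =>
        have := Nat.find_min hex (by omega : j < k)
        push_neg at this
        simpa [hkk] using this
    -- per-piece volume bound
    have hvolT : ∀ k : ℕ, volume (T k)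
        ≤ ENNReal.ofReal ((2/3)^(2*k) * (1 + 2*3^(2*k)*(1/16)^k)) := by
      intro k
      have hTS : T k ⊆ {x : ℝ | Metric.infDist x (preCantorSet (2*k)) ≤ (1/16)^k} := by
        rintro x ⟨hx1, hx2⟩
        have h1 : Metric.infDist x cantorSet ≤ (1/16)^k :=
          mySkbound k x hx1 (Set.mem_Ioc.mp hx2).2
        have h2 : Metric.infDist x (preCantorSet (2*k)) ≤ Metric.infDist x cantorSet :=
          Metric.infDist_le_infDist_of_subset (Set.iInter_subset _ (2*k))
            ⟨0, zero_mem_cantorSet⟩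
        exact le_trans h2 h1
      exact le_trans (measure_mono hTS) (myVol_nbhd (2*k) _ (by positivity))
    -- per-piece integral bound
    have hint : ∀ k : ℕ, (∫⁻ x in T k, ENNReal.ofReal (1 / myF x))
        ≤ ENNReal.ofReal 6 * (ENNReal.ofReal (8/9))^k := by
      intro k
      have hmeasT : MeasurableSet (T k) :=
        measurableSet_Icc.inter (myF_cont.measurable measurableSet_Ioc)
      have hptwise : ∀ x ∈ T k, ENNReal.ofReal (1 / myF x) ≤ ENNReal.ofReal (2^(k+1)) := by
        rintro x ⟨_, hx2⟩
        apply ENNReal.ofReal_le_ofReal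
        have hlo : (1/2:ℝ)^(k+1) < myF x := (Set.mem_Ioc.mp hx2).1
        have hppos : (0:ℝ) < (1/2)^(k+1) := by positivity
        have : 1 / myF x ≤ 1 / ((1/2:ℝ)^(k+1)) :=
          one_div_le_one_div_of_le hppos hlo.le
        refine this.trans (le_of_eq ?_)
        rw [one_div, ← inv_pow]
        norm_num
      calc (∫⁻ x in T k, ENNReal.ofReal (1 / myF x))
          ≤ ∫⁻ _ in T k, ENNReal.ofReal (2^(k+1)) :=
            setLIntegral_mono measurable_const hptwise
        _ = ENNReal.ofReal (2^(k+1)) * volume (T k) := by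
            rw [setLIntegral_const]
        _ ≤ ENNReal.ofReal (2^(k+1))
            * ENNReal.ofReal ((2/3)^(2*k) * (1 + 2*3^(2*k)*(1/16)^k)) := by
            gcongr
            exact hvolT k
        _ = ENNReal.ofReal ((2:ℝ)^(k+1) * ((2/3)^(2*k) * (1 + 2*3^(2*k)*(1/16)^k))) := by
            rw [← ENNReal.ofReal_mul (by positivity)]
        _ ≤ ENNReal.ofReal (6*(8/9)^k) := ENNReal.ofReal_le_ofReal (real_bound k)
        _ = ENNReal.ofReal 6 * (ENNReal.ofReal (8/9))^k := by
            rw [ENNReal.ofReal_mul (by norm_num), ENNReal.ofReal_pow (by norm_num)]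
    calc (∫⁻ x in Set.Icc (0:ℝ) 1 \ {x : ℝ | myF x = 0}, ENNReal.ofReal (1 / myF x))
        ≤ ∫⁻ x in ⋃ k, T k, ENNReal.ofReal (1 / myF x) := lintegral_mono_set hcover
      _ ≤ ∑' k, ∫⁻ x in T k, ENNReal.ofReal (1 / myF x) := lintegral_iUnion_le _ _
      _ ≤ ∑' k, ENNReal.ofReal 6 * (ENNReal.ofReal (8/9))^k := ENNReal.tsum_le_tsum hint
      _ = ENNReal.ofReal 6 * ∑' k, (ENNReal.ofReal (8/9))^k := ENNReal.tsum_mul_left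
      _ = ENNReal.ofReal 6 * (1 - ENNReal.ofReal (8/9))⁻¹ := by
          rw [ENNReal.tsum_geometric]
      _ < ⊤ := by
          apply ENNReal.mul_lt_top ENNReal.ofReal_lt_top
          exact ENNReal.inv_lt_top.mpr (tsub_pos_of_lt (ENNReal.ofReal_lt_one.mpr (by norm_num)))
end

section
/- Let f : ℝ → ℝ be bounded and regulated, and satisfy the no-jamming condition. Then every Carathéodory solution of ẋ = f(x) defined on a bounded interval [0,T] can be extended to a Carathéodory solution defined on all of [0,∞): if x : [0,T] → ℝ satisfies x(t) = x(0) + ∫₀ᵗ f(x(s)) ds for all t ∈ [0,T], then there exists x̃ : [0,∞) → ℝ with x̃ = x on [0,T] and x̃(t) = x(0) + ∫₀ᵗ f(x̃(s)) ds for all t ≥ 0. -/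
open MeasureTheory Set Filter
open scoped ENNReal NNReal

/-- `f` is regulated with left limits `fl` and right limits `fr`. -/
def Regulated (f fl fr : ℝ → ℝ) : Prop :=
  ∀ y : ℝ,
    Filter.Tendsto f (nhdsWithin y (Set.Iio y)) (nhds (fl y)) ∧
    Filter.Tendsto f (nhdsWithin y (Set.Ioi y)) (nhds (fr y))


/-- The no-jamming condition: if `f(y−)·f(y+) = 0` or `f(y−) > 0 > f(y+)`, then `f(y) = 0`. -/
def NoJamming (f fl fr : ℝ → ℝ) : Prop :=
  ∀ y : ℝ, (fl y * fr y = 0 ∨ (0 < fl y ∧ fr y < 0)) → f y = 0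

/-- quantitative right-limit: values of f near right of y are close to fr y -/
lemma right_approx {f fl fr : ℝ → ℝ} (hreg : Regulated f fl fr) (y : ℝ) {ε : ℝ} (hε : 0 < ε) :
    ∃ δ > 0, ∀ w ∈ Set.Ioo y (y + δ), |f w - fr y| < ε := by
  have h := (hreg y).2
  rw [Metric.tendsto_nhdsWithin_nhds] at h
  obtain ⟨δ, hδ, hh⟩ := h ε hε
  refine ⟨δ, hδ, fun w hw => ?_⟩
  have hd : dist w y < δ := by
    rw [Real.dist_eq, abs_lt]; constructor <;> nlinarith [hw.1, hw.2]
  have := hh hw.1 hd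
  simpa [Real.dist_eq] using this


lemma left_approx {f fl fr : ℝ → ℝ} (hreg : Regulated f fl fr) (y : ℝ) {ε : ℝ} (hε : 0 < ε) :
    ∃ δ > 0, ∀ w ∈ Set.Ioo (y - δ) y, |f w - fl y| < ε := by
  have h := (hreg y).1
  rw [Metric.tendsto_nhdsWithin_nhds] at h
  obtain ⟨δ, hδ, hh⟩ := h ε hε
  refine ⟨δ, hδ, fun w hw => ?_⟩
  have hd : dist w y < δ := by
    rw [Real.dist_eq, abs_lt]; constructor <;> nlinarith [hw.1, hw.2]
  have := hh hw.2 hd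
  simpa [Real.dist_eq] using this

/-- fr is "right continuous" in the weak sense needed -/
lemma fr_approx {f fl fr : ℝ → ℝ} (hreg : Regulated f fl fr) (y : ℝ) {ε : ℝ} (hε : 0 < ε) :
    ∃ δ > 0, ∀ z ∈ Set.Ioo y (y + δ), |fr z - fr y| ≤ ε := by
  obtain ⟨δ, hδ, hh⟩ := right_approx hreg y hε
  refine ⟨δ, hδ, fun z hz => ?_⟩
  have htz : Filter.Tendsto (fun w => |f w - fr y|) (nhdsWithin z (Set.Ioi z)) (nhds (|fr z - fr y|)) := by
    exact (((hreg z).2).sub_const (fr y)).abs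
  refine le_of_tendsto htz ?_
  filter_upwards [Ioo_mem_nhdsGT_of_mem (Set.left_mem_Ico.2 hz.2)] with w hw
  exact (hh w ⟨lt_trans hz.1 hw.1, hw.2⟩).le

lemma measurable_fr {f fl fr : ℝ → ℝ} (hreg : Regulated f fl fr) : Measurable fr := by
  -- fr = limit of step functions fr((⌊n y⌋+1)/n)
  have key : ∀ n : ℕ, Measurable (fun y : ℝ => fr ((⌊(n+1 : ℝ) * y⌋ + 1 : ℤ) / (n+1 : ℝ))) := by
    intro n
    have h1 : Measurable (fun y : ℝ => (⌊(n+1 : ℝ) * y⌋ : ℤ)) :=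
      Int.measurable_floor.comp (measurable_const.mul measurable_id)
    exact (measurable_of_countable (fun k : ℤ => fr ((k + 1 : ℤ) / (n+1 : ℝ)))).comp h1
  apply measurable_of_tendsto_metrizable key
  rw [tendsto_pi_nhds]
  intro y
  rw [Metric.tendsto_atTop]
  intro ε hε
  obtain ⟨δ, hδ, hh⟩ := fr_approx hreg y (half_pos hε)
  obtain ⟨N, hN⟩ := exists_nat_gt (1/δ)
  refine ⟨N, fun n hn => ?_⟩
  have hn1 : (1 : ℝ)/(n+1 : ℝ) < δ := by
    rw [div_lt_iff₀ (by positivity)]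
    rw [div_lt_iff₀ hδ] at hN
    have : (N : ℝ) ≤ n := by exact_mod_cast hn
    nlinarith
  set z := ((⌊(n+1 : ℝ) * y⌋ + 1 : ℤ) / (n+1 : ℝ)) with hz
  have hzy : y < z := by
    rw [hz, lt_div_iff₀ (by positivity)]
    push_cast
    nlinarith [Int.lt_floor_add_one ((n+1 : ℝ) * y)]
  have hzy2 : z < y + δ := by
    have h2 : 1 < δ * (n+1 : ℝ) := by
      rw [div_lt_iff₀ (by positivity)] at hn1; linarith
    rw [hz, div_lt_iff₀ (by positivity)]
    push_cast
    have := Int.floor_le ((n+1 : ℝ) * y)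
    nlinarith
  have := hh z ⟨hzy, hzy2⟩
  rw [Real.dist_eq]
  calc |fr z - fr y| ≤ ε/2 := this
    _ < ε := by linarith

lemma countable_f_ne_fr {f fl fr : ℝ → ℝ} (hreg : Regulated f fl fr) :
    {y : ℝ | f y ≠ fr y}.Countable := by
  have : {y : ℝ | f y ≠ fr y} ⊆ ⋃ n : ℕ, {y : ℝ | 1/(n+1 : ℝ) < |f y - fr y|} := by
    intro y hy
    simp only [Set.mem_setOf_eq, ne_eq] at hy
    have h0 : 0 < |f y - fr y| := abs_pos.2 (sub_ne_zero.2 hy)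
    obtain ⟨n, hn⟩ := exists_nat_gt (1/|f y - fr y|)
    refine Set.mem_iUnion.2 ⟨n, ?_⟩
    simp only [Set.mem_setOf_eq]
    rw [div_lt_iff₀ (by positivity)]
    rw [div_lt_iff₀ h0] at hn
    nlinarith
  refine Set.Countable.mono this (Set.countable_iUnion (fun n => ?_))
  -- B_n := {y | 1/(n+1) < |f y - fr y|} is countable: inject into ℚ
  set ε := (1 : ℝ)/(3*(n+1 : ℝ)) with hε
  have hε0 : 0 < ε := by positivity
  -- choose for each y in B_n a rational b with y < b and |f w - fr y| < ε on (y, b)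
  have choice : ∀ y : ℝ, 1/(n+1 : ℝ) < |f y - fr y| →
      ∃ q : ℚ, y < (q : ℝ) ∧ ∀ w ∈ Set.Ioo y ((q : ℝ)), |f w - fr y| < ε := by
    intro y _
    obtain ⟨δ, hδ, hh⟩ := right_approx hreg y hε0
    obtain ⟨q, hq1, hq2⟩ := exists_rat_btwn (show y < y + δ by linarith)
    exact ⟨q, hq1, fun w hw => hh w ⟨hw.1, lt_trans hw.2 hq2⟩⟩
  classical
  set B := {y : ℝ | 1/(n+1 : ℝ) < |f y - fr y|} with hB
  choose! q hq1 hq2 using choice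
  have key : ∀ y₁ ∈ B, ∀ y₂ ∈ B, y₁ < y₂ → q y₁ = q y₂ → False := by
    intro y₁ hy₁ y₂ hy₂ h hq
    simp only [hB, Set.mem_setOf_eq] at hy₁ hy₂
    have hy2b : y₂ < (q y₂ : ℝ) := hq1 y₂ hy₂
    have hy2b' : y₂ < (q y₁ : ℝ) := by rw [hq]; exact hy2b
    have hfy2 : |f y₂ - fr y₁| < ε := hq2 y₁ hy₁ y₂ ⟨h, hy2b'⟩
    obtain ⟨w, hw1, hw2⟩ := exists_between hy2b
    have h1 : |f w - fr y₁| < ε := hq2 y₁ hy₁ w ⟨lt_trans h hw1, hq ▸ hw2⟩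
    have h2 : |f w - fr y₂| < ε := hq2 y₂ hy₂ w ⟨hw1, hw2⟩
    have h3 : |fr y₂ - fr y₁| < 2*ε := by
      have := abs_sub_lt_iff.1 h1
      have := abs_sub_lt_iff.1 h2
      rw [abs_sub_lt_iff]
      constructor <;> linarith
    have h4 : |f y₂ - fr y₂| < 3*ε := by
      have := abs_sub_lt_iff.1 hfy2
      have := abs_sub_lt_iff.1 h3
      rw [abs_sub_lt_iff]
      constructor <;> linarith
    have : 3*ε = 1/(n+1 : ℝ) := by rw [hε]; field_simp
    rw [this] at h4
    linarith
  apply Set.countable_of_injective_of_countable_image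
    (f := fun y : ℝ => q y) (s := B)
  · intro y₁ hy₁ y₂ hy₂ hq
    rcases lt_trichotomy y₁ y₂ with h | h | h
    · exact absurd hq (fun hh => key y₁ hy₁ y₂ hy₂ h hh)
    · exact h
    · exact absurd hq (fun hh => key y₂ hy₂ y₁ hy₁ h hh.symm)
  · exact Set.to_countable _

lemma measurable_f {f fl fr : ℝ → ℝ} (hreg : Regulated f fl fr) : Measurable f :=
  (measurable_fr hreg).measurable_of_countable_ne
    (Set.Countable.mono (fun y (hy : fr y ≠ f y) => (by simpa [ne_comm] using hy : f y ≠ fr y))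
      (countable_f_ne_fr hreg))

lemma forward_sol_right {f fl fr : ℝ → ℝ} {M : ℝ} (hb : ∀ y : ℝ, |f y| ≤ M)
    (hreg : Regulated f fl fr) (hnj : NoJamming f fl fr) (y0 : ℝ) (hfr0 : 0 < fr y0) :
    ∃ u : ℝ → ℝ, u 0 = y0 ∧ ∀ t : ℝ, 0 ≤ t →
      IntervalIntegrable (fun s => f (u s)) volume 0 t ∧
      u t = y0 + ∫ s in (0:ℝ)..t, f (u s) := by
  classical
  have hf := measurable_f hreg
  -- M positive
  have hM : 0 < M := by
    obtain ⟨δ, hδ, hh⟩ := right_approx hreg y0 (half_pos hfr0)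
    have h1 := hh (y0 + δ/2) ⟨by linarith, by linarith⟩
    have h2 := hb (y0 + δ/2)
    have := abs_sub_lt_iff.1 h1
    have := abs_le.1 h2
    linarith
  set φ : ℝ → ℝ≥0∞ := fun w => if 0 < f w then ENNReal.ofReal (f w)⁻¹ else ∞ with hφ
  have hφm : Measurable φ := by
    apply Measurable.ite (hf measurableSet_Ioi) _ measurable_const
    exact (ENNReal.measurable_ofReal.comp (hf.inv))
  have hφ_lb : ∀ w, ENNReal.ofReal M⁻¹ ≤ φ w := by
    intro w
    simp only [hφ]
    split_ifs with h
    · exact ENNReal.ofReal_le_ofReal (by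
        apply inv_anti₀ h
        exact (abs_le.1 (hb w)).2)
    · exact le_top
  set ρ : Measure ℝ := volume.withDensity φ with hρ
  set τ : ℝ → ℝ≥0∞ := fun z => ρ (Set.Ioc y0 z) with hτ
  have hρ_ac : ρ ≪ volume := withDensity_absolutelyContinuous _ _
  have hτ_mono : ∀ a c : ℝ, a ≤ c → τ a ≤ τ c := fun a c h =>
    measure_mono (Set.Ioc_subset_Ioc le_rfl h)
  have hτ_add : ∀ a c : ℝ, y0 ≤ a → a ≤ c → τ c = τ a + ρ (Set.Ioc a c) := by
    intro a c _ hac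
    rw [hτ]
    simp only
    rw [← Set.Ioc_union_Ioc_eq_Ioc (by linarith : y0 ≤ a) hac]
    exact measure_union (Set.Ioc_disjoint_Ioc_of_le le_rfl) measurableSet_Ioc
  have hτ_lb : ∀ z : ℝ, y0 ≤ z → ENNReal.ofReal ((z - y0)/M) ≤ τ z := by
    intro z hz
    have e0 : τ z = ∫⁻ w in Set.Ioc y0 z, φ w ∂volume := by
      rw [hτ]; simp only [hρ]; rw [withDensity_apply _ measurableSet_Ioc]
    rw [e0]
    calc ENNReal.ofReal ((z - y0)/M)
        = ENNReal.ofReal M⁻¹ * volume (Set.Ioc y0 z) := by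
          rw [Real.volume_Ioc, ← ENNReal.ofReal_mul (by positivity), div_eq_inv_mul]
      _ = ∫⁻ _ in Set.Ioc y0 z, ENNReal.ofReal M⁻¹ ∂volume := by
          rw [setLIntegral_const]
      _ ≤ ∫⁻ w in Set.Ioc y0 z, φ w ∂volume := lintegral_mono fun w => hφ_lb w
  have hτ_y0 : τ y0 = 0 := by simp [hτ]
  -- quantitative bound on τ growth to the right of a point with positive right limit
  have hstep : ∀ c : ℝ, 0 < fr c → ∃ δ > 0, ∀ ε ∈ Set.Ioc (0:ℝ) δ,
      ρ (Set.Ioc c (c + ε)) ≤ ENNReal.ofReal (ε * (2 / fr c)) := by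
    intro c hc
    obtain ⟨δ, hδ, hh⟩ := right_approx hreg c (half_pos hc)
    refine ⟨δ/2, by positivity, fun ε hε => ?_⟩
    have key : ∀ w ∈ Set.Ioc c (c + ε), φ w ≤ ENNReal.ofReal (2 / fr c) := by
      intro w hw
      have hw' : w ∈ Set.Ioo c (c + δ) := ⟨hw.1, lt_of_le_of_lt hw.2 (by linarith [hε.2])⟩
      have h1 := abs_sub_lt_iff.1 (hh w hw')
      have hfw : fr c / 2 < f w := by linarith [h1.2]
      have hfw0 : 0 < f w := by linarith
      simp only [hφ, if_pos hfw0]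
      apply ENNReal.ofReal_le_ofReal
      rw [div_eq_mul_inv, show (2:ℝ) * (fr c)⁻¹ = (fr c / 2)⁻¹ by field_simp]
      exact inv_anti₀ (by linarith) hfw.le
    have e0 : ρ (Set.Ioc c (c + ε)) = ∫⁻ w in Set.Ioc c (c + ε), φ w ∂volume := by
      simp only [hρ]; rw [withDensity_apply _ measurableSet_Ioc]
    rw [e0]
    calc ∫⁻ w in Set.Ioc c (c + ε), φ w ∂volume
        ≤ ∫⁻ _ in Set.Ioc c (c + ε), ENNReal.ofReal (2 / fr c) ∂volume :=
          setLIntegral_mono measurable_const key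
      _ = ENNReal.ofReal (2 / fr c) * volume (Set.Ioc c (c + ε)) := setLIntegral_const _ _
      _ ≤ ENNReal.ofReal (ε * (2 / fr c)) := by
          rw [Real.volume_Ioc, add_sub_cancel_left, ← ENNReal.ofReal_mul (by positivity),
            mul_comm]
  -- shrinking intervals have small measure
  have hshrink : ∀ c ε0 : ℝ, 0 < ε0 → ρ (Set.Ioc c (c + ε0)) < ⊤ →
      ∀ η : ℝ≥0∞, 0 < η → ∃ ε : ℝ, 0 < ε ∧ ε ≤ ε0 ∧ ρ (Set.Ioc c (c + ε)) < η := by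
    intro c ε0 hε0 hfin η hη
    set sq : ℕ → Set ℝ := fun n => Set.Ioc c (c + ε0/(n+1)) with hsq
    have hanti : Antitone sq := by
      intro m n hmn
      apply Set.Ioc_subset_Ioc le_rfl
      have : ε0/(n+1 : ℝ) ≤ ε0/(m+1 : ℝ) := by
        apply div_le_div_of_nonneg_left hε0.le (by positivity)
        exact_mod_cast by omega
      linarith
    have hinter : (⋂ n, sq n) = ∅ := by
      ext w
      simp only [Set.mem_iInter, Set.mem_empty_iff_false, iff_false, not_forall, hsq]
      by_cases hw : c < w
      · obtain ⟨n, hn⟩ := exists_nat_gt (ε0 / (w - c))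
        refine ⟨n, fun hmem => ?_⟩
        have h1 : ε0 / (n+1 : ℝ) < w - c := by
          rw [div_lt_iff₀ (by positivity)]
          rw [div_lt_iff₀ (by linarith)] at hn
          nlinarith [hn]
        have := hmem.2
        simp only [Set.mem_Ioc] at hmem
        linarith [hmem.2]
      · exact ⟨0, fun hmem => hw hmem.1⟩
    have htend := MeasureTheory.tendsto_measure_iInter_atTop
      (μ := ρ) (s := sq) (fun n => (measurableSet_Ioc).nullMeasurableSet) hanti
      ⟨0, by
        refine ne_of_lt (lt_of_le_of_lt (measure_mono ?_) hfin)
        apply Set.Ioc_subset_Ioc le_rfl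
        simp only [Nat.cast_zero]
        linarith [hε0]⟩
    rw [hinter, measure_empty] at htend
    have := (htend.eventually (eventually_lt_nhds hη)).exists
    obtain ⟨n, hn⟩ := this
    refine ⟨ε0/(n+1), by positivity, ?_, hn⟩
    rw [div_le_iff₀ (by positivity)]
    nlinarith [hε0.le, (by positivity : (0:ℝ) < (n:ℝ)+1)]
  -- a.e. positivity
  have hae_pos : ∀ c : ℝ, τ c < ⊤ → ∀ᵐ w ∂(volume.restrict (Set.Ioc y0 c)), 0 < f w := by
    intro c hc
    have e0 : τ c = ∫⁻ w in Set.Ioc y0 c, φ w ∂volume := by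
      rw [hτ]; simp only [hρ]; rw [withDensity_apply _ measurableSet_Ioc]
    rw [e0] at hc
    filter_upwards [ae_lt_top hφm hc.ne] with w hw
    by_contra hcon
    simp only [hφ, if_neg hcon] at hw
    exact absurd hw (lt_irrefl ⊤)
  set S : ℝ → Set ℝ := fun t => {z : ℝ | y0 ≤ z ∧ τ z ≤ ENNReal.ofReal t} with hS
  have hS_ne : ∀ t, (S t).Nonempty := fun t => ⟨y0, le_rfl, by simp [hτ_y0]⟩
  have hS_bdd : ∀ t, BddAbove (S t) := by
    intro t
    refine ⟨y0 + M * max t 0, fun z hz => ?_⟩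
    obtain ⟨hz1, hz2⟩ := hz
    have h1 : ENNReal.ofReal ((z - y0)/M) ≤ ENNReal.ofReal (max t 0) :=
      le_trans (hτ_lb z hz1) (le_trans hz2 (ENNReal.ofReal_le_ofReal (le_max_left _ _)))
    have h2 : (z - y0)/M ≤ max t 0 := by
      have := (ENNReal.ofReal_le_ofReal_iff (le_max_right t 0)).1 h1
      linarith [this]
    rw [div_le_iff₀ hM] at h2
    linarith
  set u : ℝ → ℝ := fun t => sSup (S t) with hu
  have hu_ge : ∀ t, y0 ≤ u t := fun t => le_csSup (hS_bdd t) ⟨le_rfl, by simp [hτ_y0]⟩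
  have hu_mono : Monotone u := by
    intro s t hst
    exact csSup_le_csSup (hS_bdd t) (hS_ne s)
      (fun z hz => ⟨hz.1, le_trans hz.2 (ENNReal.ofReal_le_ofReal hst)⟩)
  have hu_meas : Measurable u := hu_mono.measurable
  have hu0 : u 0 = y0 := by
    refine le_antisymm (csSup_le (hS_ne 0) fun z hz => ?_) (hu_ge 0)
    obtain ⟨hz1, hz2⟩ := hz
    rcases le_or_gt z y0 with h | h
    · exact h
    · exfalso
      have h0 : τ z = 0 := le_antisymm (by simpa using hz2) (zero_le)
      have := hτ_lb z hz1
      rw [h0, le_zero_iff, ENNReal.ofReal_eq_zero] at this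
      nlinarith [div_pos (by linarith : (0:ℝ) < z - y0) hM]
  -- τ (u t) ≤ ofReal t
  have hτu : ∀ t : ℝ, τ (u t) ≤ ENNReal.ofReal t := by
    intro t
    obtain ⟨z, hzmono, hztend, hzmem⟩ := exists_seq_tendsto_sSup (hS_ne t) (hS_bdd t)
    have hsub : Set.Ioc y0 (u t) ⊆ (⋃ n, Set.Ioc y0 (z n)) ∪ {u t} := by
      intro w hw
      rcases lt_or_eq_of_le hw.2 with h | h
      · obtain ⟨n, hn⟩ := ((tendsto_order.1 hztend).1 w h).exists
        exact Or.inl (Set.mem_iUnion.2 ⟨n, hw.1, hn.le⟩)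
      · exact Or.inr (by simp [h])
    have hpt : ρ {u t} = 0 := hρ_ac (measure_singleton _)
    calc τ (u t) ≤ ρ ((⋃ n, Set.Ioc y0 (z n)) ∪ {u t}) := measure_mono hsub
      _ ≤ ρ (⋃ n, Set.Ioc y0 (z n)) + ρ {u t} := measure_union_le _ _
      _ = ρ (⋃ n, Set.Ioc y0 (z n)) := by rw [hpt, add_zero]
      _ = ⨆ n, ρ (Set.Ioc y0 (z n)) := by
          apply Directed.measure_iUnion
          exact (Monotone.directed_le fun m n h => Set.Ioc_subset_Ioc le_rfl (hzmono h))
      _ ≤ ENNReal.ofReal t := iSup_le fun n => (hzmem n).2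
  -- if z > u s then τ z > ofReal s
  have hults : ∀ s z : ℝ, u s < z → ENNReal.ofReal s < τ z := by
    intro s z hz
    by_contra hcon
    push_neg at hcon
    exact absurd (le_csSup (hS_bdd s) ⟨le_trans (hu_ge s) hz.le, hcon⟩) (not_le.2 hz)
  -- positivity of u for t > 0
  have hu_pos : ∀ t : ℝ, 0 < t → y0 < u t := by
    intro t ht
    obtain ⟨δ, hδ, hh⟩ := hstep y0 hfr0
    set ε := min δ (t * fr y0 / 2) with hε
    have hε0 : 0 < ε := lt_min hδ (by positivity)
    have h1 : ρ (Set.Ioc y0 (y0 + ε)) ≤ ENNReal.ofReal (ε * (2 / fr y0)) :=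
      hh ε ⟨hε0, min_le_left _ _⟩
    have h2 : ε * (2 / fr y0) ≤ t := by
      have := min_le_right δ (t * fr y0 / 2)
      rw [hε]
      calc min δ (t * fr y0 / 2) * (2 / fr y0) ≤ (t * fr y0 / 2) * (2 / fr y0) := by
            apply mul_le_mul_of_nonneg_right this (by positivity)
        _ = t := by field_simp
    have h3 : τ (y0 + ε) ≤ ENNReal.ofReal t := by
      have := hτ_add y0 (y0 + ε) le_rfl (by linarith)
      rw [this, hτ_y0, zero_add]
      exact le_trans h1 (ENNReal.ofReal_le_ofReal h2)
    have : y0 + ε ∈ S t := ⟨by linarith, h3⟩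
    have := le_csSup (hS_bdd t) this
    rw [hu]
    linarith
  refine ⟨u, hu0, fun t ht => ?_⟩
  rcases eq_or_lt_of_le ht with rfl | ht
  · constructor
    · simp [intervalIntegrable_iff]
    · simp [hu0]
  -- main case t > 0
  set b := u t with hbdef
  have hby0 : y0 < b := hu_pos t ht
  have hτb : τ b ≤ ENNReal.ofReal t := hτu t
  have hτb_fin : τ b < ⊤ := lt_of_le_of_lt hτb ENNReal.ofReal_lt_top
  set t1 : ℝ := (τ b).toReal with ht1
  have hτb' : τ b = ENNReal.ofReal t1 := by
    rw [ht1, ENNReal.ofReal_toReal hτb_fin.ne]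
  have ht1_nonneg : 0 ≤ t1 := ENNReal.toReal_nonneg
  have ht1t : t1 ≤ t := by
    rw [ht1]
    exact ENNReal.toReal_le_of_le_ofReal ht.le hτb
  have hub : ∀ s : ℝ, t1 ≤ s → s ≤ t → u s = b := by
    intro s hs1 hs2
    refine le_antisymm (hu_mono hs2) ?_
    apply le_csSup (hS_bdd s)
    exact ⟨(hu_ge t), by rw [hτb']; exact ENNReal.ofReal_le_ofReal hs1⟩
  -- sticking implies f b = 0
  have hstick : t1 < t → f b = 0 := by
    intro h
    -- τ is infinite beyond b
    have hinf : ∀ ε : ℝ, 0 < ε → τ (b + ε) = ⊤ := by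
      intro ε hε
      by_contra hfin'
      have hadd := hτ_add b (b + ε) (hu_ge t) (by linarith)
      have hρfin : ρ (Set.Ioc b (b + ε)) < ⊤ := by
        by_contra hcon
        push_neg at hcon
        rw [top_le_iff.1 hcon, add_top] at hadd
        exact hfin' hadd
      obtain ⟨ε', hε'0, hε'le, hlt⟩ := hshrink b ε hε hρfin (ENNReal.ofReal (t - t1))
        (ENNReal.ofReal_pos.2 (by linarith))
      have h1 : τ (b + ε') < ENNReal.ofReal t := by
        rw [hτ_add b (b + ε') (hu_ge t) (by linarith), hτb']
        calc ENNReal.ofReal t1 + ρ (Set.Ioc b (b + ε'))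
            < ENNReal.ofReal t1 + ENNReal.ofReal (t - t1) :=
              ENNReal.add_lt_add_left ENNReal.ofReal_ne_top hlt
          _ = ENNReal.ofReal t := by
              rw [← ENNReal.ofReal_add ht1_nonneg (by linarith)]
              ring_nf
      have h2 : ENNReal.ofReal t < τ (b + ε') := hults t (b + ε') (by rw [← hbdef]; linarith)
      exact absurd (lt_trans h1 h2) (lt_irrefl _)
    -- right limit at b is ≤ 0
    have hfrb : fr b ≤ 0 := by
      by_contra hcon
      push_neg at hcon
      obtain ⟨δ, hδ, hh⟩ := hstep b hcon
      have h1 := hh δ ⟨hδ, le_rfl⟩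
      have h2 : τ (b + δ) = ⊤ := hinf δ hδ
      rw [hτ_add b (b + δ) (hu_ge t) (by linarith)] at h2
      have : ρ (Set.Ioc b (b + δ)) < ⊤ := lt_of_le_of_lt h1 ENNReal.ofReal_lt_top
      rw [ENNReal.add_eq_top] at h2
      rcases h2 with h2 | h2
      · exact absurd h2 hτb_fin.ne
      · exact absurd h2 this.ne
    -- left limit at b is ≥ 0
    have hflb : 0 ≤ fl b := by
      by_contra hcon
      push_neg at hcon
      obtain ⟨δ, hδ, hh⟩ := left_approx hreg b (ε := -(fl b)/2) (by linarith)
      set δ' := min δ (b - y0) with hδ'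
      have hδ'0 : 0 < δ' := lt_min hδ (by linarith)
      have hsub : Set.Ioo (b - δ') b ⊆ {w | ¬ 0 < f w} ∩ Set.Ioc y0 b := by
        intro w hw
        have hle1 : δ' ≤ δ := min_le_left _ _
        have hle2 : δ' ≤ b - y0 := min_le_right _ _
        have hw1 : w ∈ Set.Ioo (b - δ) b := ⟨by linarith [hw.1], hw.2⟩
        have h1 := abs_sub_lt_iff.1 (hh w hw1)
        constructor
        · simp only [Set.mem_setOf_eq, not_lt]
          linarith [h1.1]
        · exact ⟨by linarith [hw.1], hw.2.le⟩
      have hnull := hae_pos b hτb_fin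
      rw [MeasureTheory.ae_iff] at hnull
      rw [Measure.restrict_apply₀ (by
        exact (MeasurableSet.compl (hf measurableSet_Ioi)).nullMeasurableSet)] at hnull
      have : volume (Set.Ioo (b - δ') b) = 0 :=
        measure_mono_null (by
          intro w hw
          exact ⟨(hsub hw).1, (hsub hw).2⟩) hnull
      rw [Real.volume_Ioo] at this
      have h2 : b - (b - δ') ≤ 0 := by
        by_contra h3
        push_neg at h3
        rw [ENNReal.ofReal_eq_zero] at this
        linarith
      linarith
    -- conclude by no-jamming
    rcases lt_or_eq_of_le hfrb with h1 | h1
    · rcases lt_or_eq_of_le hflb with h2 | h2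
      · exact hnj b (Or.inr ⟨h2, h1⟩)
      · exact hnj b (Or.inl (by rw [← h2, zero_mul]))
    · exact hnj b (Or.inl (by rw [h1, mul_zero]))
  -- pushforward measure identification
  set ν : Measure ℝ := ρ.restrict (Set.Ioc y0 b) with hν
  have hν_fin : ν Set.univ = ENNReal.ofReal t1 := by
    rw [hν, Measure.restrict_apply MeasurableSet.univ, Set.univ_inter, ← hτb']
  set μ : Measure ℝ := Measure.map u (volume.restrict (Set.Ioc 0 t1)) with hμ
  have hμν : μ = ν := by
    haveI : IsFiniteMeasure μ := by
      constructor
      rw [hμ, Measure.map_apply hu_meas MeasurableSet.univ, Set.preimage_univ,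
        Measure.restrict_apply MeasurableSet.univ, Set.univ_inter, Real.volume_Ioc]
      exact ENNReal.ofReal_lt_top
    apply Measure.ext_of_Iic
    intro c
    have hLHS : μ (Set.Iic c) = volume (u ⁻¹' Set.Iic c ∩ Set.Ioc 0 t1) := by
      rw [hμ, Measure.map_apply hu_meas measurableSet_Iic,
        Measure.restrict_apply (hu_meas measurableSet_Iic)]
    have hRHS : ν (Set.Iic c) = ρ (Set.Iic c ∩ Set.Ioc y0 b) := by
      rw [hν, Measure.restrict_apply measurableSet_Iic]
    rcases lt_or_ge c y0 with hc | hc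
    · -- below y0 : both zero
      rw [hLHS, hRHS]
      have e1 : u ⁻¹' Set.Iic c ∩ Set.Ioc 0 t1 = ∅ := by
        ext s
        simp only [Set.mem_inter_iff, Set.mem_preimage, Set.mem_Iic, Set.mem_Ioc,
          Set.mem_empty_iff_false, iff_false, not_and]
        intro hus
        exfalso
        exact absurd (le_trans (hu_ge s) hus) (not_le.2 hc)
      have e2 : Set.Iic c ∩ Set.Ioc y0 b = ∅ := by
        ext w
        simp only [Set.mem_inter_iff, Set.mem_Iic, Set.mem_Ioc, Set.mem_empty_iff_false,
          iff_false, not_and]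
        intro hw1 hw2
        intro _
        linarith
      rw [e1, e2, measure_empty, measure_empty]
    rcases lt_or_ge c b with hcb | hcb
    · -- middle regime y0 ≤ c < b
      have hτc_le : τ c ≤ τ b := hτ_mono c b hcb.le
      have hτc_fin : τ c < ⊤ := lt_of_le_of_lt hτc_le hτb_fin
      set a : ℝ := (τ c).toReal with ha
      have hτc' : τ c = ENNReal.ofReal a := by rw [ha, ENNReal.ofReal_toReal hτc_fin.ne]
      have ha_nonneg : 0 ≤ a := ENNReal.toReal_nonneg
      have ha_le : a ≤ t1 := by
        rw [ha, ht1]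
        exact ENNReal.toReal_mono hτb_fin.ne hτc_le
      have hRHS' : ν (Set.Iic c) = τ c := by
        rw [hRHS]
        congr 1
        ext w
        simp only [Set.mem_inter_iff, Set.mem_Iic, Set.mem_Ioc]
        constructor
        · rintro ⟨h1, h2, h3⟩; exact ⟨h2, h1⟩
        · rintro ⟨h1, h2⟩; exact ⟨h2, h1, by linarith⟩
      rw [hLHS, hRHS']
      set E := u ⁻¹' Set.Iic c ∩ Set.Ioc 0 t1 with hE
      -- lower bound
      have hlow : ENNReal.ofReal a ≤ volume E := by
        have evol : ENNReal.ofReal a = volume (Set.Ioo 0 a) := by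
          rw [Real.volume_Ioo, sub_zero]
        rw [evol]
        apply measure_mono
        intro s hs
        obtain ⟨hs0, hsa⟩ := hs
        constructor
        · simp only [Set.mem_preimage, Set.mem_Iic]
          by_contra hcon
          push_neg at hcon
          have h1 : τ c ≤ τ (u s) := hτ_mono c (u s) hcon.le
          have h2 := hτu s
          have h3 : ENNReal.ofReal s < ENNReal.ofReal a :=
            (ENNReal.ofReal_lt_ofReal_iff_of_nonneg hs0.le).2 hsa
          rw [← hτc'] at h3
          exact absurd (lt_of_le_of_lt (le_trans h1 h2) h3) (lt_irrefl _)
        · exact ⟨hs0, by linarith⟩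
      -- upper bound
      have hup : volume E ≤ τ c := by
        apply ENNReal.le_of_forall_pos_le_add
        intro η hη _
        have hρcb_fin : ρ (Set.Ioc c (c + (b - c))) < ⊤ := by
          have : c + (b - c) = b := by ring
          rw [this]
          exact lt_of_le_of_lt (measure_mono (Set.Ioc_subset_Ioc hc le_rfl)) hτb_fin
        obtain ⟨ε, hε0, hεle, hεlt⟩ := hshrink c (b - c) (by linarith) hρcb_fin η
          (by exact_mod_cast hη)
        have hτcε_fin : τ (c + ε) ≤ τ b := hτ_mono _ _ (by linarith)
        have hsubE : E ⊆ Set.Ioc 0 ((τ (c + ε)).toReal) := by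
          intro s hs
          obtain ⟨hs1, hs2⟩ := hs
          simp only [Set.mem_preimage, Set.mem_Iic] at hs1
          have h1 : ENNReal.ofReal s < τ (c + ε) := hults s (c + ε) (by linarith)
          refine ⟨hs2.1, ?_⟩
          have h2 : τ (c + ε) = ENNReal.ofReal ((τ (c + ε)).toReal) :=
            (ENNReal.ofReal_toReal (lt_of_le_of_lt hτcε_fin hτb_fin).ne).symm
          rw [h2] at h1
          exact ((ENNReal.ofReal_lt_ofReal_iff_of_nonneg hs2.1.le).1 h1).le
        calc volume E ≤ volume (Set.Ioc 0 ((τ (c + ε)).toReal)) := measure_mono hsubE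
          _ = ENNReal.ofReal ((τ (c + ε)).toReal) := by rw [Real.volume_Ioc, sub_zero]
          _ ≤ τ (c + ε) := ENNReal.ofReal_toReal_le
          _ = τ c + ρ (Set.Ioc c (c + ε)) := hτ_add c (c + ε) hc (by linarith)
          _ ≤ τ c + η := add_le_add_right hεlt.le _
      rw [hτc'] at hup ⊢
      exact le_antisymm hup hlow
    · -- upper regime c ≥ b
      rw [hLHS, hRHS]
      have e1 : u ⁻¹' Set.Iic c ∩ Set.Ioc 0 t1 = Set.Ioc 0 t1 := by
        apply Set.inter_eq_right.2
        intro s hs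
        simp only [Set.mem_preimage, Set.mem_Iic]
        have : u s ≤ u t := hu_mono (by linarith [hs.2])
        rw [← hbdef] at this
        linarith
      have e2 : Set.Iic c ∩ Set.Ioc y0 b = Set.Ioc y0 b := by
        apply Set.inter_eq_right.2
        intro w hw
        simp only [Set.mem_Iic]
        linarith [hw.2]
      rw [e1, e2, Real.volume_Ioc, sub_zero]
      have : ρ (Set.Ioc y0 b) = τ b := rfl
      rw [this, hτb']
  -- f is a.e. strongly measurable and integrable wrt ν
  have hν_ac : ν ≪ volume := by
    refine Measure.AbsolutelyContinuous.mk (fun s hs h0 => ?_)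
    rw [hν, Measure.restrict_apply hs]
    exact hρ_ac (measure_mono_null (Set.inter_subset_left) h0)
  haveI : IsFiniteMeasure ν := ⟨by rw [hν_fin]; exact ENNReal.ofReal_lt_top⟩
  have hfsm : AEStronglyMeasurable f ν := (hf.comp measurable_id).aestronglyMeasurable
  have hfint : Integrable f ν := by
    refine Integrable.mono' (integrable_const M) hfsm ?_
    filter_upwards with w
    exact hb w
  -- transfer to time side
  have hint_move : IntegrableOn (fun s => f (u s)) (Set.Ioc 0 t1) volume := by
    have hsm' : AEStronglyMeasurable f (Measure.map u (volume.restrict (Set.Ioc 0 t1))) := by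
      rw [← hμ, hμν]; exact hfsm
    have := (integrable_map_measure hsm' hu_meas.aemeasurable).1 (by rw [← hμ, hμν]; exact hfint)
    exact this
  have hval_move : ∫ s in Set.Ioc 0 t1, f (u s) = b - y0 := by
    have hsm' : AEStronglyMeasurable f (Measure.map u (volume.restrict (Set.Ioc 0 t1))) := by
      rw [← hμ, hμν]; exact hfsm
    have h1 : ∫ s in Set.Ioc 0 t1, f (u s) = ∫ w, f w ∂ν := by
      rw [← hμν, hμ, integral_map hu_meas.aemeasurable hsm']
    rw [h1]
    set ψ : ℝ → ℝ≥0 := fun w => (φ w).toNNReal with hψ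
    have hψm : Measurable ψ := hφm.ennreal_toNNReal
    have e1 : ν = (volume.restrict (Set.Ioc y0 b)).withDensity (fun w => (ψ w : ℝ≥0∞)) := by
      rw [hν, hρ, restrict_withDensity measurableSet_Ioc]
      apply withDensity_congr_ae
      filter_upwards [hae_pos b hτb_fin] with w hw
      simp only [hψ, hφ, if_pos hw]
      rw [ENNReal.coe_toNNReal ENNReal.ofReal_ne_top]
    rw [e1, integral_withDensity_eq_integral_smul hψm f]
    have e2 : ∫ w in Set.Ioc y0 b, ψ w • f w ∂volume = ∫ w in Set.Ioc y0 b, (1:ℝ) ∂volume := by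
      apply integral_congr_ae
      filter_upwards [hae_pos b hτb_fin] with w hw
      simp only [hψ, hφ, if_pos hw, NNReal.smul_def, smul_eq_mul]
      have e3 : ((ENNReal.ofReal (f w)⁻¹).toNNReal : ℝ) = (f w)⁻¹ := by
        simp only [ENNReal.ofReal, ENNReal.toNNReal_coe]
        exact Real.coe_toNNReal _ (by positivity)
      rw [e3]
      exact inv_mul_cancel₀ (ne_of_gt hw)
    rw [e2, setIntegral_const, smul_eq_mul, mul_one, Real.volume_real_Ioc_of_le (by linarith)]
  -- tail piece
  have htail_eq : ∀ s ∈ Set.Ioc t1 t, f (u s) = f b := fun s hs => by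
    rw [hub s hs.1.le hs.2]
  have hint_tail : IntegrableOn (fun s => f (u s)) (Set.Ioc t1 t) volume := by
    apply (integrableOn_congr_fun htail_eq measurableSet_Ioc).2
    exact integrableOn_const (by rw [Real.volume_Ioc]; exact ENNReal.ofReal_ne_top)
  have hval_tail : ∫ s in Set.Ioc t1 t, f (u s) = 0 := by
    rw [setIntegral_congr_fun measurableSet_Ioc htail_eq]
    rcases eq_or_lt_of_le ht1t with h | h
    · rw [h]; simp
    · rw [setIntegral_const, hstick h, smul_zero]
  -- combine
  have hsplit : Set.Ioc (0:ℝ) t = Set.Ioc 0 t1 ∪ Set.Ioc t1 t :=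
    (Set.Ioc_union_Ioc_eq_Ioc ht1_nonneg ht1t).symm
  have hint : IntegrableOn (fun s => f (u s)) (Set.Ioc 0 t) volume := by
    rw [hsplit]; exact hint_move.union hint_tail
  constructor
  · rw [intervalIntegrable_iff_integrableOn_Ioc_of_le ht.le]; exact hint
  · rw [intervalIntegral.integral_of_le ht.le, hsplit,
      setIntegral_union (Set.Ioc_disjoint_Ioc_of_le le_rfl) measurableSet_Ioc hint_move hint_tail,
      hval_move, hval_tail]
    ring

lemma forward_sol {f fl fr : ℝ → ℝ} {M : ℝ} (hb : ∀ y : ℝ, |f y| ≤ M)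
    (hreg : Regulated f fl fr) (hnj : NoJamming f fl fr) (y0 : ℝ) :
    ∃ u : ℝ → ℝ, u 0 = y0 ∧ ∀ t : ℝ, 0 ≤ t →
      IntervalIntegrable (fun s => f (u s)) volume 0 t ∧
      u t = y0 + ∫ s in (0:ℝ)..t, f (u s) := by
  by_cases hf0 : f y0 = 0
  · refine ⟨fun _ => y0, rfl, fun t ht => ?_⟩
    constructor
    · exact intervalIntegrable_const
    · rw [intervalIntegral.integral_const, hf0, smul_zero, add_zero]
  · have hne : ¬ (fl y0 * fr y0 = 0 ∨ (0 < fl y0 ∧ fr y0 < 0)) := fun h => hf0 (hnj y0 h)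
    push_neg at hne
    obtain ⟨hmul, hpair⟩ := hne
    have hfl0 : fl y0 ≠ 0 := fun h => hmul (by rw [h, zero_mul])
    have hfr0 : fr y0 ≠ 0 := fun h => hmul (by rw [h, mul_zero])
    rcases lt_or_gt_of_ne hfr0 with hfr | hfr
    · -- fr y0 < 0, so fl y0 < 0, reflect
      have hfl : fl y0 < 0 := by
        rcases lt_or_gt_of_ne hfl0 with h | h
        · exact h
        · linarith [hpair h]
      set g : ℝ → ℝ := fun y => -f (-y) with hg
      set gl : ℝ → ℝ := fun y => -fr (-y) with hgl
      set gr : ℝ → ℝ := fun y => -fl (-y) with hgr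
      have hbg : ∀ y : ℝ, |g y| ≤ M := fun y => by rw [hg]; simpa using hb (-y)
      have hneg : ∀ y : ℝ,
          Filter.Tendsto (fun z : ℝ => -z) (nhdsWithin y (Set.Iio y))
            (nhdsWithin (-y) (Set.Ioi (-y))) ∧
          Filter.Tendsto (fun z : ℝ => -z) (nhdsWithin y (Set.Ioi y))
            (nhdsWithin (-y) (Set.Iio (-y))) := by
        intro y
        constructor
        · rw [tendsto_nhdsWithin_iff]
          refine ⟨(continuous_neg.tendsto y).mono_left nhdsWithin_le_nhds, ?_⟩
          filter_upwards [self_mem_nhdsWithin] with z hz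
          simpa using hz
        · rw [tendsto_nhdsWithin_iff]
          refine ⟨(continuous_neg.tendsto y).mono_left nhdsWithin_le_nhds, ?_⟩
          filter_upwards [self_mem_nhdsWithin] with z hz
          simpa using hz
      have hreg_g : Regulated g gl gr := by
        intro y
        constructor
        · exact Filter.Tendsto.neg (((hreg (-y)).2).comp (hneg y).1)
        · exact Filter.Tendsto.neg (((hreg (-y)).1).comp (hneg y).2)
      have hnj_g : NoJamming g gl gr := by
        intro y hy
        have : fl (-y) * fr (-y) = 0 ∨ (0 < fl (-y) ∧ fr (-y) < 0) := by
          rcases hy with h | h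
          · left
            have : fr (-y) * fl (-y) = 0 := by
              have := h
              simp only [hgl, hgr, neg_mul_neg] at this
              linarith [this]
            linarith [mul_comm (fr (-y)) (fl (-y)) ▸ this]
          · right
            simp only [hgl, hgr] at h
            exact ⟨by linarith [h.2], by linarith [h.1]⟩
        have h0 := hnj (-y) this
        show -f (-y) = 0
        rw [h0, neg_zero]
      have hgr_pos : 0 < gr (-y0) := by simp only [hgr, neg_neg]; linarith
      obtain ⟨v, hv0, hv⟩ := forward_sol_right hbg hreg_g hnj_g (-y0) hgr_pos
      refine ⟨fun t => -v t, by show -v 0 = y0; rw [hv0, neg_neg], fun t ht => ?_⟩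
      obtain ⟨hint, heq⟩ := hv t ht
      have hfeq : ∀ s : ℝ, f (-v s) = -g (v s) := fun s => by
        rw [hg]; simp
      constructor
      · have : (fun s => f (-v s)) = fun s => -(g (v s)) := funext hfeq
        rw [this]
        exact hint.neg
      · show -v t = y0 + ∫ s in (0:ℝ)..t, f (-v s)
        have e1 : ∫ s in (0:ℝ)..t, f (-v s) = -∫ s in (0:ℝ)..t, g (v s) := by
          rw [show (fun s => f (-v s)) = fun s => -(g (v s)) from funext hfeq]
          exact intervalIntegral.integral_neg
        rw [e1, heq]
        ring
    · exact forward_sol_right hb hreg hnj y0 hfr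

lemma sol_integrable {f : ℝ → ℝ} {M : ℝ} (hb : ∀ y : ℝ, |f y| ≤ M) (hf : Measurable f)
    {T : ℝ} (hT : 0 ≤ T) {x : ℝ → ℝ}
    (hsol : ∀ t ∈ Set.Icc (0:ℝ) T, x t = x 0 + ∫ s in (0:ℝ)..t, f (x s)) :
    IntervalIntegrable (fun s => f (x s)) volume 0 T := by
  classical
  -- integrability of a bounded function reduces to a.e. strong measurability
  have hred : ∀ t : ℝ, 0 ≤ t →
      (AEStronglyMeasurable (fun s => f (x s)) (volume.restrict (Set.Ioc 0 t)) →
        IntegrableOn (fun s => f (x s)) (Set.Ioc 0 t) volume) := by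
    intro t _ hsm
    refine Integrable.mono' (integrable_const M) hsm ?_
    filter_upwards with s
    exact hb (x s)
  set A : Set ℝ := {t | t ∈ Set.Icc 0 T ∧
    AEStronglyMeasurable (fun s => f (x s)) (volume.restrict (Set.Ioc 0 t))} with hA
  have hA0 : (0:ℝ) ∈ A := by
    refine ⟨⟨le_rfl, hT⟩, ?_⟩
    rw [Set.Ioc_self, Measure.restrict_empty]
    exact aestronglyMeasurable_zero_measure _
  have hA_ne : A.Nonempty := ⟨0, hA0⟩
  have hA_bdd : BddAbove A := ⟨T, fun z hz => hz.1.2⟩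
  set t0 := sSup A with ht0
  have ht0_mem : t0 ∈ Set.Icc 0 T := ⟨le_csSup hA_bdd hA0, csSup_le hA_ne fun z hz => hz.1.2⟩
  -- t0 itself is in A
  have ht0A : AEStronglyMeasurable (fun s => f (x s)) (volume.restrict (Set.Ioc 0 t0)) := by
    obtain ⟨z, hzmono, hztend, hzmem⟩ := exists_seq_tendsto_sSup hA_ne hA_bdd
    have hsub : Set.Ioc 0 t0 ⊆ (⋃ n, Set.Ioc 0 (z n)) ∪ {t0} := by
      intro s hs
      rcases lt_or_eq_of_le hs.2 with h | h
      · obtain ⟨n, hn⟩ := ((tendsto_order.1 hztend).1 s h).exists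
        exact Or.inl (Set.mem_iUnion.2 ⟨n, hs.1, hn.le⟩)
      · exact Or.inr (by simp [h])
    have hU : AEStronglyMeasurable (fun s => f (x s))
        (volume.restrict ((⋃ n, Set.Ioc 0 (z n)) ∪ {t0})) := by
      have e1 : ((⋃ n, Set.Ioc 0 (z n)) ∪ {t0} : Set ℝ) =ᵐ[volume] (⋃ n, Set.Ioc 0 (z n)) := by
        rw [MeasureTheory.ae_eq_set]
        constructor
        · apply measure_mono_null (Set.union_diff_left.trans_subset (Set.diff_subset))
            (measure_singleton t0)
        · have hsub2 : (⋃ n, Set.Ioc 0 (z n)) \ ((⋃ n, Set.Ioc 0 (z n)) ∪ {t0}) ⊆ (∅ : Set ℝ) :=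
            fun w hw => absurd (Set.mem_union_left _ hw.1) hw.2
          exact measure_mono_null hsub2 measure_empty
      rw [Measure.restrict_congr_set e1, aestronglyMeasurable_iUnion_iff]
      exact fun n => (hzmem n).2
    exact hU.mono_measure (Measure.restrict_mono hsub le_rfl)
  -- if t0 < T we get a contradiction
  rcases lt_or_eq_of_le ht0_mem.2 with hlt | heq
  · exfalso
    have hconst : ∀ t, t0 < t → t ≤ T → x t = x 0 := by
      intro t h1 h2
      have htA : t ∉ A := fun hmem => absurd (le_csSup hA_bdd hmem) (not_le.2 h1)
      have : ¬ IntervalIntegrable (fun s => f (x s)) volume 0 t := by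
        intro hcon
        exact htA ⟨⟨by linarith [ht0_mem.1], h2⟩,
          ((intervalIntegrable_iff_integrableOn_Ioc_of_le (by linarith [ht0_mem.1])).1 hcon).1⟩
      rw [hsol t ⟨by linarith [ht0_mem.1], h2⟩, intervalIntegral.integral_undef this, add_zero]
    -- then f ∘ x is a.e. strongly measurable on (t0, T]
    have htail : AEStronglyMeasurable (fun s => f (x s)) (volume.restrict (Set.Ioc t0 T)) := by
      apply (aestronglyMeasurable_congr (g := fun _ => f (x 0)) ?_).2
        aestronglyMeasurable_const
      rw [Filter.EventuallyEq, ae_restrict_iff' measurableSet_Ioc]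
      filter_upwards with s hs
      rw [hconst s hs.1 hs.2]
    have hTA : T ∈ A := by
      refine ⟨⟨hT, le_rfl⟩, ?_⟩
      have e1 : Set.Ioc (0:ℝ) T = Set.Ioc 0 t0 ∪ Set.Ioc t0 T :=
        (Set.Ioc_union_Ioc_eq_Ioc ht0_mem.1 hlt.le).symm
      rw [e1]
      have := (aestronglyMeasurable_iUnion_iff
        (s := fun b : Bool => if b then Set.Ioc 0 t0 else Set.Ioc t0 T)
        (μ := volume) (f := fun s => f (x s))).2 (fun b => by cases b <;> simpa)
      have e2 : (⋃ b : Bool, if b then Set.Ioc 0 t0 else Set.Ioc t0 T) =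
          Set.Ioc 0 t0 ∪ Set.Ioc t0 T := by
        ext w; simp [Set.mem_iUnion, Bool.exists_bool, or_comm]
      rwa [e2] at this
    have : T ≤ t0 := le_csSup hA_bdd hTA
    linarith
  · rw [intervalIntegrable_iff_integrableOn_Ioc_of_le hT]
    exact hred T hT (heq ▸ ht0A)

/-- Every Carathéodory solution of `ẋ = f(x)` on a bounded interval `[0,T]`
extends to a Carathéodory solution on all of `[0,∞)`. -/
theorem extension_of_caratheodory_solution
    (f : ℝ → ℝ) (M : ℝ) (hb : ∀ y : ℝ, |f y| ≤ M)
    (fl fr : ℝ → ℝ) (hreg : Regulated f fl fr) (hnj : NoJamming f fl fr)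
    (T : ℝ) (hT : 0 ≤ T) (x : ℝ → ℝ)
    (hsol : ∀ t ∈ Set.Icc (0:ℝ) T, x t = x 0 + ∫ s in (0:ℝ)..t, f (x s)) :
    ∃ xt : ℝ → ℝ, (∀ t ∈ Set.Icc (0:ℝ) T, xt t = x t) ∧
      ∀ t : ℝ, 0 ≤ t → xt t = x 0 + ∫ s in (0:ℝ)..t, f (xt s) := by
  classical
  obtain ⟨u, hu0, hu⟩ := forward_sol hb hreg hnj (x T)
  set xt : ℝ → ℝ := fun t => if t ≤ T then x t else u (t - T) with hxt
  have hagree : ∀ t ∈ Set.Icc (0:ℝ) T, xt t = x t := fun t ht => if_pos ht.2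
  refine ⟨xt, hagree, fun t ht => ?_⟩
  rcases le_or_gt t T with htT | htT
  · have e1 : ∫ s in (0:ℝ)..t, f (xt s) = ∫ s in (0:ℝ)..t, f (x s) := by
      apply intervalIntegral.integral_congr
      intro s hs
      rw [Set.uIcc_of_le ht] at hs
      have hsT : s ≤ T := le_trans hs.2 htT
      simp only [hxt, if_pos hsT]
    rw [show xt t = x t from if_pos htT, e1]
    exact hsol t ⟨ht, htT⟩
  · have hIx : IntervalIntegrable (fun s => f (x s)) volume 0 T :=
      sol_integrable hb (measurable_f hreg) hT hsol
    have h1 : IntervalIntegrable (fun s => f (xt s)) volume 0 T := by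
      rw [intervalIntegrable_iff_integrableOn_Ioc_of_le hT] at hIx ⊢
      exact (integrableOn_congr_fun
        (fun s hs => by simp only [hxt, if_pos hs.2]) measurableSet_Ioc).2 hIx
    have hIu := (hu (t - T) (by linarith)).1
    have hIu' : IntervalIntegrable (fun s => f (u (s - T))) volume T t := by
      have := hIu.comp_sub_right T
      simpa using this
    have h2 : IntervalIntegrable (fun s => f (xt s)) volume T t := by
      rw [intervalIntegrable_iff_integrableOn_Ioc_of_le htT.le] at hIu' ⊢
      exact (integrableOn_congr_fun
        (fun s hs => by simp only [hxt, if_neg (not_le.2 hs.1)]) measurableSet_Ioc).2 hIu'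
    have hsplit := intervalIntegral.integral_add_adjacent_intervals h1 h2
    have e1 : ∫ s in (0:ℝ)..T, f (xt s) = x T - x 0 := by
      have ec : ∫ s in (0:ℝ)..T, f (xt s) = ∫ s in (0:ℝ)..T, f (x s) :=
        intervalIntegral.integral_congr (fun s hs => by
          rw [Set.uIcc_of_le hT] at hs
          simp only [hxt, if_pos hs.2])
      rw [ec]
      have := hsol T ⟨hT, le_rfl⟩
      linarith
    have e2 : ∫ s in T..t, f (xt s) = u (t - T) - x T := by
      have ec : ∫ s in T..t, f (xt s) = ∫ s in T..t, f (u (s - T)) := by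
        apply intervalIntegral.integral_congr
        intro s hs
        rw [Set.uIcc_of_le htT.le] at hs
        rcases lt_or_eq_of_le hs.1 with h | h
        · simp only [hxt, if_neg (not_le.2 h)]
        · rw [← h]
          show f (xt T) = f (u (T - T))
          simp only [hxt, if_pos le_rfl, sub_self, hu0]
      rw [ec]
      calc ∫ s in T..t, f (u (s - T))
          = ∫ r in (T - T)..(t - T), f (u r) :=
            intervalIntegral.integral_comp_sub_right (fun r => f (u r)) T
        _ = u (t - T) - x T := by
            rw [sub_self]
            have := (hu (t - T) (by linarith)).2
            linarith
    have exT : xt t = u (t - T) := if_neg (not_le.2 htT)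
    rw [exT, ← hsplit, e1, e2]
    ring
end

section
/- Let f : ℝ → ℝ be bounded and regulated, and satisfy the no-jamming condition. Let xₙ : [t₁,t₂] → ℝ be a sequence of nondecreasing Carathéodory solutions of ẋ = f(x) which converges pointwise on [t₁,t₂] to a constant function with value c. Then f(c) = 0. -/
open MeasureTheory Set Filter


lemma aux_int (f x : ℝ → ℝ) (t₁ t₂ : ℝ) (ht : t₁ ≤ t₂)
    (hmono : MonotoneOn x (Set.Icc t₁ t₂))
    (hsol : ∀ t ∈ Set.Icc t₁ t₂, x t = x t₁ + ∫ s in t₁..t, f (x s)) :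
    IntervalIntegrable (fun s => f (x s)) volume t₁ t₂ := by
  by_contra hni
  have h2 := hsol t₂ ⟨ht, le_refl _⟩
  rw [intervalIntegral.integral_undef hni] at h2
  have hconst : ∀ s ∈ Set.Icc t₁ t₂, x s = x t₁ := by
    intro s hs
    have h1 := hmono (Set.left_mem_Icc.2 ht) hs hs.1
    have h3 := hmono hs (Set.right_mem_Icc.2 ht) hs.2
    linarith
  apply hni
  rw [intervalIntegrable_iff, Set.uIoc_of_le ht]
  have hc : IntegrableOn (fun _ : ℝ => f (x t₁)) (Set.Ioc t₁ t₂) volume :=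
    integrableOn_const measure_Ioc_lt_top.ne
  exact hc.congr_fun (fun s hs => by simp [hconst s (Set.Ioc_subset_Icc_self hs)])
    measurableSet_Ioc

lemma aux_single (f x : ℝ → ℝ) (t₁ t₂ c : ℝ) (ht : t₁ ≤ t₂) (hfc : f c ≠ 0)
    (hmono : MonotoneOn x (Set.Icc t₁ t₂))
    (hsol : ∀ t ∈ Set.Icc t₁ t₂, x t = x t₁ + ∫ s in t₁..t, f (x s)) :
    Set.Subsingleton {s | s ∈ Set.Icc t₁ t₂ ∧ x s = c} := by
  have key : ∀ a b : ℝ, a ∈ Set.Icc t₁ t₂ → b ∈ Set.Icc t₁ t₂ → x a = c → x b = c →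
      a < b → False := by
    intro a b ha hb hxa hxb hab
    have hint := aux_int f x t₁ t₂ ht hmono hsol
    have hI1 : IntervalIntegrable (fun s => f (x s)) volume t₁ a :=
      hint.mono_set (by rw [Set.uIcc_of_le ha.1, Set.uIcc_of_le ht]
                        exact Set.Icc_subset_Icc le_rfl ha.2)
    have hI2 : IntervalIntegrable (fun s => f (x s)) volume a b :=
      hint.mono_set (by rw [Set.uIcc_of_le hab.le, Set.uIcc_of_le ht]
                        exact Set.Icc_subset_Icc ha.1 hb.2)
    have hadd := intervalIntegral.integral_add_adjacent_intervals hI1 hI2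
    have hsa := hsol a ha
    have hsb := hsol b hb
    have heq : ∫ s in a..b, f (x s) = ∫ _ in a..b, f c := by
      apply intervalIntegral.integral_congr
      intro s hs
      rw [Set.uIcc_of_le hab.le] at hs
      have hsI : s ∈ Set.Icc t₁ t₂ := ⟨ha.1.trans hs.1, hs.2.trans hb.2⟩
      have h1 : x a ≤ x s := hmono ha hsI hs.1
      have h2 : x s ≤ x b := hmono hsI hb hs.2
      have : x s = c := le_antisymm (hxb ▸ h2) (hxa ▸ h1)
      simp only [this]
    rw [intervalIntegral.integral_const, smul_eq_mul] at heq
    have : (b - a) * f c = 0 := by rw [← heq]; linarith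
    rcases mul_eq_zero.1 this with h | h
    · linarith
    · exact hfc h
  intro a ⟨ha, hxa⟩ b ⟨hb, hxb⟩
  rcases lt_trichotomy a b with h | h | h
  · exact absurd (key a b ha hb hxa hxb h) (by simp)
  · exact h
  · exact absurd (key b a hb ha hxb hxa h) (by simp)

lemma aux_lower (f x : ℝ → ℝ) (t₁ t₂ c ε : ℝ) (ht : t₁ ≤ t₂) (hfc : f c ≠ 0)
    (hmono : MonotoneOn x (Set.Icc t₁ t₂))
    (hsol : ∀ t ∈ Set.Icc t₁ t₂, x t = x t₁ + ∫ s in t₁..t, f (x s))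
    (hp : ∀ s ∈ Set.Ioc t₁ t₂, x s ≠ c → ε ≤ f (x s)) :
    ε * (t₂ - t₁) ≤ x t₂ - x t₁ := by
  have hint := aux_int f x t₁ t₂ ht hmono hsol
  have hss := aux_single f x t₁ t₂ c ht hfc hmono hsol
  have hnull : volume ({t₁} ∪ {s | s ∈ Set.Icc t₁ t₂ ∧ x s = c}) = 0 :=
    measure_union_null (measure_singleton t₁) (hss.measure_zero _)
  have hae : ∀ᵐ s ∂(volume.restrict (Set.Icc t₁ t₂)), ε ≤ f (x s) := by
    rw [ae_restrict_iff' measurableSet_Icc, ae_iff]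
    refine measure_mono_null (fun s hs => ?_) hnull
    simp only [Set.mem_setOf_eq, not_forall] at hs
    obtain ⟨hsI, hns⟩ := hs
    rcases eq_or_lt_of_le hsI.1 with h | h
    · exact Or.inl h.symm
    · refine Or.inr ⟨hsI, ?_⟩
      by_contra hne
      exact hns (hp s ⟨h, hsI.2⟩ hne)
  have hle := intervalIntegral.integral_mono_ae_restrict ht
    (intervalIntegrable_const (c := ε)) hint hae
  rw [intervalIntegral.integral_const, smul_eq_mul] at hle
  have hs2 := hsol t₂ ⟨ht, le_refl _⟩
  linarith [mul_comm ε (t₂ - t₁)]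

lemma aux_upper (f x : ℝ → ℝ) (t₁ t₂ c ε : ℝ) (ht : t₁ ≤ t₂) (hfc : f c ≠ 0)
    (hmono : MonotoneOn x (Set.Icc t₁ t₂))
    (hsol : ∀ t ∈ Set.Icc t₁ t₂, x t = x t₁ + ∫ s in t₁..t, f (x s))
    (hp : ∀ s ∈ Set.Ioc t₁ t₂, x s ≠ c → f (x s) ≤ ε) :
    x t₂ - x t₁ ≤ ε * (t₂ - t₁) := by
  have hint := aux_int f x t₁ t₂ ht hmono hsol
  have hss := aux_single f x t₁ t₂ c ht hfc hmono hsol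
  have hnull : volume ({t₁} ∪ {s | s ∈ Set.Icc t₁ t₂ ∧ x s = c}) = 0 :=
    measure_union_null (measure_singleton t₁) (hss.measure_zero _)
  have hae : ∀ᵐ s ∂(volume.restrict (Set.Icc t₁ t₂)), f (x s) ≤ ε := by
    rw [ae_restrict_iff' measurableSet_Icc, ae_iff]
    refine measure_mono_null (fun s hs => ?_) hnull
    simp only [Set.mem_setOf_eq, not_forall] at hs
    obtain ⟨hsI, hns⟩ := hs
    rcases eq_or_lt_of_le hsI.1 with h | h
    · exact Or.inl h.symm
    · refine Or.inr ⟨hsI, ?_⟩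
      by_contra hne
      exact hns (hp s ⟨h, hsI.2⟩ hne)
  have hle := intervalIntegral.integral_mono_ae_restrict ht hint
    (intervalIntegrable_const (c := ε)) hae
  rw [intervalIntegral.integral_const, smul_eq_mul] at hle
  have hs2 := hsol t₂ ⟨ht, le_refl _⟩
  linarith [mul_comm ε (t₂ - t₁)]

/-- If nondecreasing Carathéodory solutions of `ẋ = f(x)` on `[t₁,t₂]`
converge pointwise to a constant `c`, then `f(c) = 0`. -/
theorem limit_constant_is_zero_of_f
    (f : ℝ → ℝ) (M : ℝ) (hb : ∀ y : ℝ, |f y| ≤ M)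
    (fl fr : ℝ → ℝ) (hreg : Regulated f fl fr) (hnj : NoJamming f fl fr)
    (t₁ t₂ : ℝ) (ht : t₁ < t₂)
    (xn : ℕ → ℝ → ℝ)
    (hmono : ∀ n : ℕ, MonotoneOn (xn n) (Set.Icc t₁ t₂))
    (hsol : ∀ n : ℕ, ∀ t ∈ Set.Icc t₁ t₂, xn n t = xn n t₁ + ∫ s in t₁..t, f (xn n s))
    (c : ℝ)
    (hconv : ∀ t ∈ Set.Icc t₁ t₂,
      Filter.Tendsto (fun n : ℕ => xn n t) Filter.atTop (nhds c)) :
    f c = 0 := by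
  by_contra hfc
  have hT : (0:ℝ) < t₂ - t₁ := by linarith
  have ht1 : t₁ ∈ Set.Icc t₁ t₂ := Set.left_mem_Icc.2 ht.le
  have ht2 : t₂ ∈ Set.Icc t₁ t₂ := Set.right_mem_Icc.2 ht.le
  have hnj' : ¬ (fl c * fr c = 0 ∨ (0 < fl c ∧ fr c < 0)) := fun h => hfc (hnj c h)
  push_neg at hnj'
  obtain ⟨hmul, hns⟩ := hnj'
  rw [mul_ne_zero_iff] at hmul
  obtain ⟨hfl0, hfr0⟩ := hmul
  -- tendsto of differences
  have hdiff : Filter.Tendsto (fun n : ℕ => xn n t₂ - xn n t₁) Filter.atTop (nhds 0) := by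
    have := (hconv t₂ ht2).sub (hconv t₁ ht1)
    rwa [sub_self] at this
  -- generic picking lemma
  have pick : ∀ lb ub ε : ℝ, lb < c → c < ub → 0 < ε →
      ∃ n, lb < xn n t₁ ∧ xn n t₂ < ub ∧ xn n t₂ - xn n t₁ < ε * (t₂ - t₁) := by
    intro lb ub ε hlb hub hε
    have e1 : ∀ᶠ n in Filter.atTop, xn n t₁ ∈ Set.Ioo lb ub :=
      (hconv t₁ ht1).eventually (Ioo_mem_nhds hlb hub)
    have e2 : ∀ᶠ n in Filter.atTop, xn n t₂ ∈ Set.Ioo lb ub :=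
      (hconv t₂ ht2).eventually (Ioo_mem_nhds hlb hub)
    have e3 : ∀ᶠ n in Filter.atTop, xn n t₂ - xn n t₁ < ε * (t₂ - t₁) :=
      hdiff.eventually (eventually_lt_nhds (by positivity))
    obtain ⟨n, h1, h2, h3⟩ := (e1.and (e2.and e3)).exists
    exact ⟨n, h1.1, h2.2, h3⟩
  -- membership of all values
  have hmem : ∀ (n : ℕ) (lb ub : ℝ), lb < xn n t₁ → xn n t₂ < ub →
      ∀ s ∈ Set.Icc t₁ t₂, lb < xn n s ∧ xn n s < ub := by
    intro n lb ub h1 h2 s hs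
    exact ⟨lt_of_lt_of_le h1 (hmono n ht1 hs hs.1),
      lt_of_le_of_lt (hmono n hs ht2 hs.2) h2⟩
  rcases hfl0.lt_or_gt with hfl | hfl <;> rcases hfr0.lt_or_gt with hfr | hfr
  · -- Case B : fl c < 0, fr c < 0
    have hevL : ∀ᶠ y in nhdsWithin c (Set.Iio c), f y ≤ fl c / 2 :=
      (hreg c).1.eventually (eventually_le_nhds (by linarith))
    have hevR : ∀ᶠ y in nhdsWithin c (Set.Ioi c), f y ≤ fr c / 2 :=
      (hreg c).2.eventually (eventually_le_nhds (by linarith))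
    obtain ⟨lb, hlb, hL⟩ := mem_nhdsLT_iff_exists_Ioo_subset.1 hevL
    obtain ⟨ub, hub, hR⟩ := mem_nhdsGT_iff_exists_Ioo_subset.1 hevR
    set ε : ℝ := max (fl c / 2) (fr c / 2) with hεdef
    have hεneg : ε < 0 := by
      apply max_lt <;> linarith
    obtain ⟨n, hn1, hn2, _⟩ := pick lb ub 1 hlb hub one_pos
    have hup := aux_upper f (xn n) t₁ t₂ c ε ht.le hfc (hmono n) (hsol n) ?_
    · have hord : xn n t₁ ≤ xn n t₂ := hmono n ht1 ht2 ht.le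
      nlinarith
    · intro s hs hne
      have hsI := Set.Ioc_subset_Icc_self hs
      obtain ⟨hl, hr⟩ := hmem n lb ub hn1 hn2 s hsI
      rcases hne.lt_or_gt with h | h
      · exact le_trans (hL ⟨hl, h⟩) (le_max_left _ _)
      · exact le_trans (hR ⟨h, hr⟩) (le_max_right _ _)
  · -- Case C : fl c < 0 < fr c
    have hevL : ∀ᶠ y in nhdsWithin c (Set.Iio c), f y ≤ fl c / 2 :=
      (hreg c).1.eventually (eventually_le_nhds (by linarith))
    have hevR : ∀ᶠ y in nhdsWithin c (Set.Ioi c), fr c / 2 ≤ f y :=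
      (hreg c).2.eventually (eventually_ge_nhds (by linarith))
    obtain ⟨lb, hlb, hL⟩ := mem_nhdsLT_iff_exists_Ioo_subset.1 hevL
    obtain ⟨ub, hub, hR⟩ := mem_nhdsGT_iff_exists_Ioo_subset.1 hevR
    obtain ⟨n, hn1, hn2, hnd⟩ := pick lb ub (fr c / 2) hlb hub (by linarith)
    -- no value below c after t₁
    have hge : ∀ s ∈ Set.Ioc t₁ t₂, c ≤ xn n s := by
      intro b hbo
      by_contra hlt
      push_neg at hlt
      have hbI : b ∈ Set.Icc t₁ t₂ := Set.Ioc_subset_Icc_self hbo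
      have hint := aux_int f (xn n) t₁ t₂ ht.le (hmono n) (hsol n)
      have hIb : IntervalIntegrable (fun s => f (xn n s)) volume t₁ b :=
        hint.mono_set (by rw [Set.uIcc_of_le hbo.1.le, Set.uIcc_of_le ht.le]
                          exact Set.Icc_subset_Icc le_rfl hbI.2)
      have hmb : ∫ s in t₁..b, f (xn n s) ≤ ∫ _ in t₁..b, (fl c / 2) := by
        apply intervalIntegral.integral_mono_on hbo.1.le hIb intervalIntegrable_const
        intro s hs
        have hsI : s ∈ Set.Icc t₁ t₂ := ⟨hs.1, hs.2.trans hbI.2⟩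
        have h1 : xn n s ≤ xn n b := hmono n hsI hbI hs.2
        have h2 : lb < xn n s := (hmem n lb ub hn1 hn2 s hsI).1
        exact hL ⟨h2, lt_of_le_of_lt h1 hlt⟩
      rw [intervalIntegral.integral_const, smul_eq_mul] at hmb
      have hsb := hsol n b hbI
      have hord : xn n t₁ ≤ xn n b := hmono n ht1 hbI hbI.1
      nlinarith [hbo.1]
    have hlow := aux_lower f (xn n) t₁ t₂ c (fr c / 2) ht.le hfc (hmono n) (hsol n) ?_
    · linarith
    · intro s hs hne
      have hsI := Set.Ioc_subset_Icc_self hs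
      have h1 : c < xn n s := lt_of_le_of_ne (hge s hs) (Ne.symm hne)
      exact hR ⟨h1, (hmem n lb ub hn1 hn2 s hsI).2⟩
  · -- excluded : 0 < fl c, fr c < 0
    linarith [hns hfl]
  · -- Case A : 0 < fl c, 0 < fr c
    have hevL : ∀ᶠ y in nhdsWithin c (Set.Iio c), fl c / 2 ≤ f y :=
      (hreg c).1.eventually (eventually_ge_nhds (by linarith))
    have hevR : ∀ᶠ y in nhdsWithin c (Set.Ioi c), fr c / 2 ≤ f y :=
      (hreg c).2.eventually (eventually_ge_nhds (by linarith))
    obtain ⟨lb, hlb, hL⟩ := mem_nhdsLT_iff_exists_Ioo_subset.1 hevL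
    obtain ⟨ub, hub, hR⟩ := mem_nhdsGT_iff_exists_Ioo_subset.1 hevR
    set ε : ℝ := min (fl c / 2) (fr c / 2) with hεdef
    have hεpos : 0 < ε := lt_min (by linarith) (by linarith)
    obtain ⟨n, hn1, hn2, hnd⟩ := pick lb ub ε hlb hub hεpos
    have hlow := aux_lower f (xn n) t₁ t₂ c ε ht.le hfc (hmono n) (hsol n) ?_
    · linarith
    · intro s hs hne
      have hsI := Set.Ioc_subset_Icc_self hs
      obtain ⟨hl, hr⟩ := hmem n lb ub hn1 hn2 s hsI
      rcases hne.lt_or_gt with h | h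
      · exact le_trans (min_le_left _ _) (hL ⟨hl, h⟩)
      · exact le_trans (min_le_right _ _) (hR ⟨h, hr⟩)
end
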